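/- Let d be a positive integer and let ℓ₁,…,ℓ_{d−1} be a fixed sequence of positive integers, and set k = ⌊ℓ₁⋯ℓ_{d−1}/2⌋. Let N(n) denote the number of self-complementary ideals of [ℓ₁]×⋯×[ℓ_{d−1}]×[n]. Then there exists a real constant C > 0 such that N(n)/n^k tends to C as n tends to infinity, where if ℓ₁⋯ℓ_{d−1} is even then n ranges over all positive integers, and if ℓ₁⋯ℓ_{d−1} is odd then n ranges over all even positive integers. -/

import Mathlib

open Finset

/-- An ideal (downward-closed subset, possibly empty) of a finite poset. -/
def IsIdeal {P : Type*} [PartialOrder P] (I : Finset P) : Prop :=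
  ∀ a ∈ I, ∀ b, b ≤ a → b ∈ I

/-- A self-complementary ideal with respect to an involution `φ`. -/
def IsSCIdeal {P : Type*} [PartialOrder P] (φ : P → P) (I : Finset P) : Prop :=
  IsIdeal I ∧ ∀ a, a ∈ I ↔ φ a ∉ I

/-- The flip graph on self-complementary ideals: two ideals are adjacent when they
differ in exactly one element each way. -/
def FlipGraph {P : Type*} [PartialOrder P] [DecidableEq P] (φ : P → P) :
    SimpleGraph {I : Finset P // IsSCIdeal φ I} where
  Adj I J := I ≠ J ∧ (I.1 \ J.1).card = 1 ∧ (J.1 \ I.1).card = 1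
  symm := ⟨fun _ _ h => ⟨h.1.symm, h.2.2, h.2.1⟩⟩
  loopless := ⟨fun _ h => h.1 rfl⟩

/-- Eccentricity of a vertex: its maximum distance to any vertex. -/
noncomputable def eccentricity {V : Type*} (G : SimpleGraph V) (v : V) : ℕ :=
  ⨆ u, G.dist v u

/-- Diameter of a graph: the maximum eccentricity. -/
noncomputable def graphDiam {V : Type*} (G : SimpleGraph V) : ℕ :=
  ⨆ v, eccentricity G v

/-- Radius of a graph: the minimum eccentricity. -/
noncomputable def graphRadius {V : Type*} (G : SimpleGraph V) : ℕ :=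
  ⨅ v, eccentricity G v

/-- The order-reversing involution `aᵢ ↦ ℓᵢ + 1 - aᵢ` on a product of chains
(0-indexed via `Fin.rev`). -/
def chainRev {d : ℕ} (ℓ : Fin d → ℕ) (a : ∀ i, Fin (ℓ i)) : ∀ i, Fin (ℓ i) :=
  fun i => (a i).rev

/-- The order-reversing involution on `[ℓ₁] × ⋯ × [ℓ_{d-1}] × [n]`. -/
def prodRevMix {m : ℕ} (ℓ : Fin m → ℕ) (n : ℕ) (p : (∀ i, Fin (ℓ i)) × Fin n) :
    (∀ i, Fin (ℓ i)) × Fin n :=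
  (fun i => (p.1 i).rev, p.2.rev)

section AnalyticPart
open MeasureTheory Metric Filter Set Pointwise
open scoped ENNReal

variable {ι : Type*} [Fintype ι]

def icube (z : ι → ℤ) : Set (ι → ℝ) := Set.pi Set.univ (fun p => Set.Ico (z p : ℝ) (z p + 1))

lemma icube_volume (z : ι → ℤ) : volume (icube z) = 1 := by
  rw [icube, volume_pi_pi]; simp [Real.volume_Ico]

lemma icube_measurable (z : ι → ℤ) : MeasurableSet (icube z) :=
  MeasurableSet.univ_pi (fun _ => measurableSet_Ico)

lemma icube_disjoint {z z' : ι → ℤ} (h : z ≠ z') : Disjoint (icube z) (icube z') := by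
  rw [Set.disjoint_left]
  rintro x hx hx'
  apply h
  funext p
  have h1 := hx p (Set.mem_univ p)
  have h2 := hx' p (Set.mem_univ p)
  simp only [Set.mem_Ico] at h1 h2
  have b1 : ((z p : ℝ)) < z' p + 1 := lt_of_le_of_lt h1.1 h2.2
  have b2 : ((z' p : ℝ)) < z p + 1 := lt_of_le_of_lt h2.1 h1.2
  have a1 : z p < z' p + 1 := by exact_mod_cast b1
  have a2 : z' p < z p + 1 := by exact_mod_cast b2
  omega

lemma mem_icube_floor (x : ι → ℝ) : x ∈ icube (fun p => ⌊x p⌋) := by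
  intro p _
  exact ⟨Int.floor_le _, Int.lt_floor_add_one _⟩

lemma icube_subset_ball (z : ι → ℤ) {x : ι → ℝ} (hx : x ∈ icube z) :
    dist (fun p => (z p : ℝ)) x ≤ 1 := by
  rw [dist_pi_le_iff zero_le_one]
  intro p
  have := hx p (Set.mem_univ p)
  simp only [Set.mem_Ico] at this
  rw [Real.dist_eq, abs_le]
  constructor <;> linarith [this.1, this.2]

lemma floor_dist_le (x : ι → ℝ) : dist (fun p => ((⌊x p⌋ : ℤ) : ℝ)) x ≤ 1 := by
  rw [dist_pi_le_iff zero_le_one]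
  intro p
  rw [Real.dist_eq, abs_le]
  constructor
  · linarith [Int.lt_floor_add_one (x p)]
  · linarith [Int.floor_le (x p)]

lemma vol_affine (c : ℝ) (b : ι → ℝ) (s : Set (ι → ℝ)) :
    volume ((fun y => c • y + b) '' s) = ENNReal.ofReal (|c| ^ (Fintype.card ι)) * volume s := by
  have h : (fun y : ι → ℝ => c • y + b) '' s = (fun y => y + b) '' (c • s) := by
    rw [← Set.image_smul, Set.image_image]
  rw [h, Set.image_add_right, measure_preimage_add_right,
    Measure.addHaar_smul, abs_pow, Module.finrank_fintype_fun_eq_card]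

/-- Core convexity helper. -/
lemma conv_helper {S : Set (ι → ℝ)} (hS : Convex ℝ S) {c : ι → ℝ} {ρ : ℝ}
    (hball : closedBall c ρ ⊆ S) {q : ι → ℝ} (hq : q ∈ S) {t : ℝ} (ht : 0 < t) (h1t : t ≤ 1)
    {w : ι → ℝ} (hw : ‖w‖ ≤ t * ρ) :
    (1 - t) • q + t • c + w ∈ S := by
  have hρ : 0 ≤ ρ := by
    have : (0:ℝ) ≤ t * ρ := le_trans (norm_nonneg w) hw
    nlinarith
  have hmem : c + t⁻¹ • w ∈ S := by
    apply hball
    rw [mem_closedBall, dist_self_add_left, norm_smul, norm_inv, Real.norm_eq_abs,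
      abs_of_pos ht]
    rw [inv_mul_le_iff₀ ht]
    exact hw
  have heq : (1 - t) • q + t • c + w = (1 - t) • q + t • (c + t⁻¹ • w) := by
    rw [smul_add, smul_smul, mul_inv_cancel₀ ht.ne', one_smul, add_assoc]
  rw [heq]
  exact hS hq hmem (by linarith) ht.le (by ring)


lemma ball_smul_subset {Q : Set (ι → ℝ)} {x₀ : ι → ℝ} {r : ℝ} (hr : 0 < r)
    (hball : closedBall x₀ r ⊆ Q) {n : ℕ} (hn : 1 ≤ n) :
    closedBall ((n : ℝ) • x₀) (r * n) ⊆ (n : ℝ) • Q := by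
  intro y hy
  have hn0 : (0:ℝ) < n := by exact_mod_cast hn
  refine ⟨(n:ℝ)⁻¹ • y, ?_, ?_⟩
  · apply hball
    rw [mem_closedBall] at hy ⊢
    have : (n:ℝ)⁻¹ • y - x₀ = (n:ℝ)⁻¹ • (y - (n:ℝ) • x₀) := by
      rw [smul_sub, smul_smul, inv_mul_cancel₀ hn0.ne', one_smul]
    rw [dist_eq_norm] at hy ⊢
    rw [this, norm_smul, norm_inv, Real.norm_natCast]
    rw [inv_mul_le_iff₀ hn0]
    calc ‖y - (n:ℝ) • x₀‖ ≤ r * n := hy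
    _ = n * r := by ring
  · simpa using smul_inv_smul₀ hn0.ne' y

theorem lattice_count_tendsto (Q : Set (ι → ℝ))
    (hconv : Convex ℝ Q) (hQb : Q ⊆ closedBall 0 1)
    {x₀ : ι → ℝ} {r : ℝ} (hr : 0 < r) (hball : closedBall x₀ r ⊆ Q)
    (T : ℕ → Finset (ι → ℤ))
    (hT : ∀ n : ℕ, 1 ≤ n → ∀ g : ι → ℤ, (g ∈ T n ↔ (fun p => (g p : ℝ)) ∈ (n : ℝ) • Q)) :
    0 < (volume Q).toReal ∧
      Tendsto (fun n : ℕ => ((T n).card : ℝ) / (n : ℝ) ^ (Fintype.card ι))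
        atTop (nhds ((volume Q).toReal)) := by
  set k := Fintype.card ι
  set V := volume Q with hV
  have hV0 : 0 < V := lt_of_lt_of_le (measure_closedBall_pos volume x₀ hr) (measure_mono hball)
  have hVt : V ≠ ⊤ := ((measure_mono hQb).trans_lt measure_closedBall_lt_top).ne
  set Vr := V.toReal with hVrdef
  have hVr : 0 < Vr := ENNReal.toReal_pos hV0.ne' hVt
  refine ⟨hVr, ?_⟩
  -- volume of the union of cubes over T n
  have volU : ∀ n : ℕ, volume (⋃ z ∈ T n, icube z) = ((T n).card : ℝ≥0∞) := by
    intro n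
    have hpd : ((T n : Set (ι → ℤ))).PairwiseDisjoint icube := by
      intro z _ z' _ hzz'
      exact icube_disjoint hzz'
    rw [measure_biUnion_finset hpd (fun z _ => icube_measurable z)]
    simp [icube_volume]
  -- the bounds, for n large
  have key : ∀ n : ℕ, 1 ≤ n → 1 ≤ r * n →
      ENNReal.ofReal ((1 - (r*n)⁻¹)^k * (n:ℝ)^k) * V ≤ ((T n).card : ℝ≥0∞) ∧
      ((T n).card : ℝ≥0∞) ≤ ENNReal.ofReal ((1 + (r*n)⁻¹)^k * (n:ℝ)^k) * V := by
    intro n hn hrn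
    have hn0 : (0:ℝ) < n := by exact_mod_cast hn
    set ρ : ℝ := r * n with hρdef
    have hρ0 : 0 < ρ := by positivity
    set t : ℝ := ρ⁻¹ with htdef
    have ht0 : 0 < t := by positivity
    have ht1 : t ≤ 1 := by rw [htdef]; rw [inv_le_one_iff₀]; right; exact hrn
    set x₀' : ι → ℝ := (n : ℝ) • x₀ with hx₀'
    have hballn : closedBall x₀' ρ ⊆ (n:ℝ) • Q := ball_smul_subset hr hball hn
    have hconvn : Convex ℝ ((n:ℝ) • Q) := hconv.smul _
    have htρ : t * ρ = 1 := inv_mul_cancel₀ hρ0.ne'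
    -- volume of n • Q
    have volnQ : volume ((n:ℝ) • Q) = ENNReal.ofReal ((n:ℝ)^k) * V := by
      rw [Measure.addHaar_smul_of_nonneg volume hn0.le, Module.finrank_fintype_fun_eq_card]
    constructor
    · -- lower bound
      have hsub : (fun y => (1 - t) • y + t • x₀') '' ((n:ℝ) • Q) ⊆ ⋃ z ∈ T n, icube z := by
        rintro x ⟨q, hq, rfl⟩
        have hcb : closedBall ((1 - t) • q + t • x₀') 1 ⊆ (n:ℝ) • Q := by
          intro y hy
          have : y = (1 - t) • q + t • x₀' + (y - ((1 - t) • q + t • x₀')) := by abel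
          rw [this]
          apply conv_helper hconvn hballn hq ht0 ht1
          rw [htρ]
          rw [mem_closedBall, dist_eq_norm] at hy
          exact hy
        set x := (1 - t) • q + t • x₀' with hx
        have hfl : (fun p => ((⌊x p⌋ : ℤ) : ℝ)) ∈ (n:ℝ) • Q := by
          apply hcb
          rw [mem_closedBall]
          exact floor_dist_le x
        have hzT : (fun p => ⌊x p⌋) ∈ T n := (hT n hn _).2 hfl
        exact Set.mem_biUnion hzT (mem_icube_floor x)
      have hvol := measure_mono (μ := (volume : Measure (ι → ℝ))) hsub
      rw [volU n, vol_affine] at hvol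
      calc ENNReal.ofReal ((1 - t)^k * (n:ℝ)^k) * V
          = ENNReal.ofReal (|1 - t| ^ k) * volume ((n:ℝ) • Q) := by
            rw [volnQ, abs_of_nonneg (by linarith : (0:ℝ) ≤ 1 - t), ENNReal.ofReal_mul (pow_nonneg (by linarith) k), mul_assoc]
        _ ≤ ((T n).card : ℝ≥0∞) := hvol
    · -- upper bound
      have hsub : (⋃ z ∈ T n, icube z) ⊆
          (fun y => (1 + t) • y + ((-t) • x₀')) '' ((n:ℝ) • Q) := by
        intro x hx
        rcases Set.mem_iUnion₂.1 hx with ⟨z, hz, hxz⟩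
        have hq : (fun p => ((z p : ℤ) : ℝ)) ∈ (n:ℝ) • Q := (hT n hn z).1 hz
        set q : ι → ℝ := fun p => ((z p : ℤ) : ℝ) with hqdef
        set t' : ℝ := t / (1 + t) with ht'def
        have h1t : (0:ℝ) < 1 + t := by linarith
        have ht'0 : 0 < t' := by positivity
        have ht'1 : t' ≤ 1 := by
          rw [ht'def, div_le_one h1t]; linarith
        refine ⟨(1 + t)⁻¹ • (x + t • x₀'), ?_, ?_⟩
        · have heq : (1 + t)⁻¹ • (x + t • x₀')
              = (1 - t') • q + t' • x₀' + (1 + t)⁻¹ • (x - q) := by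
            have h1 : (1:ℝ) - t' = (1 + t)⁻¹ := by
              rw [ht'def]; field_simp; ring
            have h2 : t' = t * (1 + t)⁻¹ := by rw [ht'def]; ring
            rw [h1, h2, smul_add, smul_smul, smul_smul, smul_sub]
            module
          rw [heq]
          apply conv_helper hconvn hballn hq ht'0 ht'1
          have : t' * ρ = (1 + t)⁻¹ := by
            rw [ht'def, div_mul_eq_mul_div, htdef]
            rw [inv_mul_cancel₀ hρ0.ne']
            rw [← htdef]
            field_simp
          rw [this, norm_smul, norm_inv, Real.norm_eq_abs, abs_of_pos h1t]
          have hd : ‖x - q‖ ≤ 1 := by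
            have := icube_subset_ball z hxz
            rw [dist_eq_norm] at this
            calc ‖x - q‖ = ‖q - x‖ := by rw [norm_sub_rev]
            _ ≤ 1 := this
          calc (1+t)⁻¹ * ‖x - q‖ ≤ (1+t)⁻¹ * 1 := by
                apply mul_le_mul_of_nonneg_left hd (by positivity)
          _ = (1+t)⁻¹ := by ring
        · show (1 + t) • ((1 + t)⁻¹ • (x + t • x₀')) + (-t) • x₀' = x
          rw [smul_inv_smul₀ h1t.ne']
          module
      have hvol := (volU n).symm.trans_le (measure_mono (μ := (volume : Measure (ι → ℝ))) hsub)
      rw [vol_affine] at hvol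
      calc ((T n).card : ℝ≥0∞)
          ≤ ENNReal.ofReal (|1 + t| ^ k) * volume ((n:ℝ) • Q) := hvol
        _ = ENNReal.ofReal ((1 + t)^k * (n:ℝ)^k) * V := by
            rw [volnQ, abs_of_nonneg (by linarith : (0:ℝ) ≤ 1 + t), ENNReal.ofReal_mul (by positivity), mul_assoc]
  -- real-number bounds
  have keyR : ∀ n : ℕ, 1 ≤ n → 1 ≤ r * n →
      (1 - (r*n)⁻¹)^k * Vr ≤ ((T n).card : ℝ) / (n:ℝ)^k ∧
      ((T n).card : ℝ) / (n:ℝ)^k ≤ (1 + (r*n)⁻¹)^k * Vr := by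
    intro n hn hrn
    obtain ⟨hlo, hhi⟩ := key n hn hrn
    have hn0 : (0:ℝ) < n := by exact_mod_cast hn
    have ht1 : (r*n)⁻¹ ≤ 1 := by rw [inv_le_one_iff₀]; right; exact hrn
    have hnk : (0:ℝ) < (n:ℝ)^k := by positivity
    constructor
    · have := ENNReal.toReal_mono (by simp : ((T n).card : ℝ≥0∞) ≠ ⊤) hlo
      rw [ENNReal.toReal_mul, ENNReal.toReal_ofReal (mul_nonneg (pow_nonneg (by linarith) k) (by positivity)), ENNReal.toReal_natCast] at this
      rw [le_div_iff₀ hnk]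
      calc (1 - (r*n)⁻¹)^k * Vr * (n:ℝ)^k = (1 - (r*↑n)⁻¹) ^ k * ↑n ^ k * Vr := by ring
      _ ≤ _ := this
    · have hfin : ENNReal.ofReal ((1 + (r*n)⁻¹)^k * (n:ℝ)^k) * V ≠ ⊤ :=
        ENNReal.mul_ne_top ENNReal.ofReal_ne_top hVt
      have := ENNReal.toReal_mono hfin hhi
      rw [ENNReal.toReal_mul, ENNReal.toReal_ofReal (by positivity), ENNReal.toReal_natCast] at this
      rw [div_le_iff₀ hnk]
      calc ((T n).card : ℝ) ≤ (1 + (r*↑n)⁻¹) ^ k * ↑n ^ k * Vr := this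
      _ = (1 + (r*↑n)⁻¹)^k * Vr * (n:ℝ)^k := by ring
  -- squeeze
  have hinv : Tendsto (fun n : ℕ => (r * (n:ℝ))⁻¹) atTop (nhds 0) := by
    apply Tendsto.inv_tendsto_atTop
    exact Tendsto.const_mul_atTop hr tendsto_natCast_atTop_atTop
  have hlow : Tendsto (fun n : ℕ => (1 - (r*(n:ℝ))⁻¹)^k * Vr) atTop (nhds Vr) := by
    have h1 : Tendsto (fun n : ℕ => 1 - (r*(n:ℝ))⁻¹) atTop (nhds 1) := by
      simpa using tendsto_const_nhds.sub hinv
    have := (h1.pow k).mul_const Vr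
    simpa using this
  have hhigh : Tendsto (fun n : ℕ => (1 + (r*(n:ℝ))⁻¹)^k * Vr) atTop (nhds Vr) := by
    have h1 : Tendsto (fun n : ℕ => 1 + (r*(n:ℝ))⁻¹) atTop (nhds 1) := by
      simpa using tendsto_const_nhds.add hinv
    have := (h1.pow k).mul_const Vr
    simpa using this
  have hev : ∀ᶠ n : ℕ in atTop, 1 ≤ n ∧ 1 ≤ r * n := by
    filter_upwards [eventually_ge_atTop (max 1 (Nat.ceil r⁻¹))] with n hn
    have h1 : 1 ≤ n := le_trans (le_max_left _ _) hn
    have h2 : (Nat.ceil r⁻¹ : ℕ) ≤ n := le_trans (le_max_right _ _) hn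
    refine ⟨h1, ?_⟩
    have : r⁻¹ ≤ (n:ℝ) := le_trans (Nat.le_ceil r⁻¹) (by exact_mod_cast h2)
    calc (1:ℝ) = r * r⁻¹ := by rw [mul_inv_cancel₀ hr.ne']
    _ ≤ r * n := by apply mul_le_mul_of_nonneg_left this hr.le
  apply tendsto_of_tendsto_of_tendsto_of_le_of_le' hlow hhigh
  · filter_upwards [hev] with n hn
    exact (keyR n hn.1 hn.2).1
  · filter_upwards [hev] with n hn
    exact (keyR n hn.1 hn.2).2

end AnalyticPart


section Comb
variable {m : ℕ} (ℓ : Fin m → ℕ)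

lemma rv_rv (a : ∀ i, Fin (ℓ i)) : chainRev ℓ (chainRev ℓ a) = a := by
  funext i; simp [chainRev, Fin.rev_rev]

lemma rv_antitone {a b : ∀ i, Fin (ℓ i)} (h : a ≤ b) : chainRev ℓ b ≤ chainRev ℓ a := by
  intro i
  exact Fin.rev_le_rev.2 (h i)

/-- chosen representatives of 2-element orbits of chainRev -/
def goodRep (p : ∀ i, Fin (ℓ i)) : Prop :=
  (Fintype.equivFin (∀ i, Fin (ℓ i))) p < (Fintype.equivFin (∀ i, Fin (ℓ i))) (chainRev ℓ p)

noncomputable instance : DecidablePred (goodRep ℓ) := fun p => by unfold goodRep; infer_instance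

lemma not_goodRep_rv {p : ∀ i, Fin (ℓ i)} (h : goodRep ℓ p) : ¬ goodRep ℓ (chainRev ℓ p) := by
  unfold goodRep at *
  rw [rv_rv]
  omega

lemma trichotomy {p : ∀ i, Fin (ℓ i)} (h1 : ¬ goodRep ℓ p) (h2 : ¬ goodRep ℓ (chainRev ℓ p)) :
    chainRev ℓ p = p := by
  unfold goodRep at *
  rw [rv_rv] at h2
  have h3 : (Fintype.equivFin (∀ i, Fin (ℓ i))) p
      = (Fintype.equivFin (∀ i, Fin (ℓ i))) (chainRev ℓ p) := by omega
  exact ((Fintype.equivFin (∀ i, Fin (ℓ i))).injective h3).symm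

lemma fixed_not_good {p : ∀ i, Fin (ℓ i)} (h : chainRev ℓ p = p) : ¬ goodRep ℓ p := by
  unfold goodRep
  rw [h]
  omega

lemma fixed_all_odd {p : ∀ i, Fin (ℓ i)} (h : chainRev ℓ p = p) : ∀ i, Odd (ℓ i) := by
  intro i
  have hv := congrArg Fin.val (congrFun h i)
  simp only [chainRev, Fin.val_rev] at hv
  have hlt := (p i).isLt
  exact ⟨(p i).val, by omega⟩

lemma even_no_fixed (h : Even (∏ i, ℓ i)) : ∀ p : ∀ i, Fin (ℓ i), chainRev ℓ p ≠ p := by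
  intro p hp
  have hodd : Odd (∏ i, ℓ i) := Finset.prod_induction ℓ Odd (fun a b => Odd.mul) odd_one
    (fun i _ => fixed_all_odd ℓ hp i)
  exact (Nat.not_even_iff_odd.2 hodd) h

lemma card_goodRep (hpos : ∀ i, 0 < ℓ i) :
    Fintype.card {p : ∀ i, Fin (ℓ i) // goodRep ℓ p} = (∏ i, ℓ i) / 2 := by
  classical
  have hcardP : Fintype.card (∀ i, Fin (ℓ i)) = ∏ i, ℓ i := by
    simp [Fintype.card_pi]
  set G : Finset (∀ i, Fin (ℓ i)) := univ.filter (goodRep ℓ) with hG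
  set G' : Finset (∀ i, Fin (ℓ i)) := univ.filter (fun p => goodRep ℓ (chainRev ℓ p)) with hG'
  set F : Finset (∀ i, Fin (ℓ i)) := univ.filter (fun p => chainRev ℓ p = p) with hF
  have hGG' : G.card = G'.card := by
    apply Finset.card_bij (fun p _ => chainRev ℓ p)
    · intro a ha
      simp only [hG, hG', mem_filter, mem_univ, true_and] at ha ⊢
      rw [rv_rv]; exact ha
    · intro a _ b _ hab
      have := congrArg (chainRev ℓ) hab
      rwa [rv_rv, rv_rv] at this
    · intro b hb
      simp only [hG, hG', mem_filter, mem_univ, true_and] at hb ⊢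
      exact ⟨chainRev ℓ b, hb, rv_rv ℓ b⟩
  have hsplit : (univ : Finset (∀ i, Fin (ℓ i))).card = G.card + (G'.card + F.card) := by
    rw [← Finset.card_filter_add_card_filter_not (s := univ) (p := goodRep ℓ)]
    congr 1
    set s := univ.filter (fun p => ¬ goodRep ℓ p) with hs
    rw [← Finset.card_filter_add_card_filter_not (s := s)
      (p := fun p => goodRep ℓ (chainRev ℓ p))]
    congr 1
    · congr 1
      rw [hs, hG', Finset.filter_filter]
      apply Finset.filter_congr
      intro p _
      constructor
      · exact fun h => h.2
      · intro h
        refine ⟨?_, h⟩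
        have := not_goodRep_rv ℓ h
        rw [rv_rv] at this
        exact this
    · congr 1
      rw [hs, hF, Finset.filter_filter]
      apply Finset.filter_congr
      intro p _
      constructor
      · intro h
        exact trichotomy ℓ h.1 h.2
      · intro h
        refine ⟨fixed_not_good ℓ h, ?_⟩
        rw [h]
        exact fixed_not_good ℓ h
  have hFcard : F.card = (∏ i, ℓ i) % 2 := by
    by_cases hev : Even (∏ i, ℓ i)
    · have : F = ∅ := by
        rw [hF, Finset.filter_eq_empty_iff]
        intro p _
        exact even_no_fixed ℓ hev p
      rw [this]
      simp [Nat.even_iff.1 hev]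
    · have hodd : ∀ i, Odd (ℓ i) := by
        intro i
        by_contra hi
        rw [Nat.not_odd_iff_even] at hi
        have hd : (2:ℕ) ∣ ∏ j, ℓ j :=
          dvd_trans hi.two_dvd (Finset.dvd_prod_of_mem ℓ (mem_univ i))
        exact hev (even_iff_two_dvd.2 hd)
      have h2 : (∏ i, ℓ i) % 2 = 1 := by
        rw [Nat.odd_iff.1 (Nat.not_even_iff_odd.1 hev)]
      rw [h2]
      rw [Finset.card_eq_one]
      refine ⟨fun i => ⟨ℓ i / 2, by have := hpos i; omega⟩, ?_⟩
      rw [hF]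
      ext q
      simp only [mem_filter, mem_univ, true_and, Finset.mem_singleton]
      constructor
      · intro hq
        funext i
        have hv := congrArg Fin.val (congrFun hq i)
        simp only [chainRev, Fin.val_rev] at hv
        have hlt := (q i).isLt
        have hoddi := (hodd i)
        obtain ⟨c, hc⟩ := hoddi
        apply Fin.ext
        show (q i).val = ℓ i / 2
        omega
      · intro hq
        rw [hq]
        funext i
        apply Fin.ext
        simp only [chainRev, Fin.val_rev]
        obtain ⟨c, hc⟩ := hodd i
        show ℓ i - (ℓ i / 2 + 1) = ℓ i / 2
        omega
  have hGcard : Fintype.card {p : ∀ i, Fin (ℓ i) // goodRep ℓ p} = G.card := by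
    rw [hG]
    exact Fintype.card_subtype (goodRep ℓ)
  rw [Finset.card_univ, hcardP] at hsplit
  rw [hGcard]
  have hmod := Nat.mod_two_eq_zero_or_one (∏ i, ℓ i)
  omega

def OkZ (n : ℕ) (g : {p : ∀ i, Fin (ℓ i) // goodRep ℓ p} → ℤ) : Prop :=
  (∀ p, 0 ≤ g p ∧ g p ≤ n) ∧
  (∀ p q, p.1 ≤ q.1 → g q ≤ g p) ∧
  (∀ p q, p.1 ≤ chainRev ℓ q.1 → (n : ℤ) ≤ g p + g q) ∧
  (∀ p q, chainRev ℓ p.1 ≤ q.1 → g p + g q ≤ (n : ℤ)) ∧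
  (∀ (p : {p : ∀ i, Fin (ℓ i) // goodRep ℓ p}) (z : ∀ i, Fin (ℓ i)),
      chainRev ℓ z = z → z ≤ p.1 → 2 * g p ≤ (n : ℤ)) ∧
  (∀ (p : {p : ∀ i, Fin (ℓ i) // goodRep ℓ p}) (z : ∀ i, Fin (ℓ i)),
      chainRev ℓ z = z → p.1 ≤ z → (n : ℤ) ≤ 2 * g p)

noncomputable def fval (n : ℕ) (g : {p : ∀ i, Fin (ℓ i) // goodRep ℓ p} → ℤ)
    (p : ∀ i, Fin (ℓ i)) : ℤ :=
  if h : goodRep ℓ p then g ⟨p, h⟩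
  else if h2 : goodRep ℓ (chainRev ℓ p) then (n : ℤ) - g ⟨chainRev ℓ p, h2⟩
  else (n : ℤ) / 2

variable {ℓ} {n : ℕ} {g : {p : ∀ i, Fin (ℓ i) // goodRep ℓ p} → ℤ}

lemma fval_good {p : ∀ i, Fin (ℓ i)} (h : goodRep ℓ p) : fval ℓ n g p = g ⟨p, h⟩ := by
  rw [fval, dif_pos h]

lemma fval_rvgood {p : ∀ i, Fin (ℓ i)} (h : goodRep ℓ (chainRev ℓ p)) :
    fval ℓ n g p = (n : ℤ) - g ⟨chainRev ℓ p, h⟩ := by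
  have h1 : ¬ goodRep ℓ p := by
    have := not_goodRep_rv ℓ h
    rwa [rv_rv] at this
  rw [fval, dif_neg h1, dif_pos h]

lemma fval_fixed {p : ∀ i, Fin (ℓ i)} (h : chainRev ℓ p = p) : fval ℓ n g p = (n : ℤ) / 2 := by
  have h1 : ¬ goodRep ℓ p := fixed_not_good ℓ h
  have h2 : ¬ goodRep ℓ (chainRev ℓ p) := by rw [h]; exact h1
  rw [fval, dif_neg h1, dif_neg h2]

lemma fval_bounds (hg : OkZ ℓ n g) (p : ∀ i, Fin (ℓ i)) :
    0 ≤ fval ℓ n g p ∧ fval ℓ n g p ≤ n := by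
  by_cases h : goodRep ℓ p
  · rw [fval_good h]; exact hg.1 _
  · by_cases h2 : goodRep ℓ (chainRev ℓ p)
    · rw [fval_rvgood h2]
      have := hg.1 ⟨chainRev ℓ p, h2⟩
      omega
    · rw [fval_fixed (trichotomy ℓ h h2)]
      omega

lemma fval_antitone (hg : OkZ ℓ n g) {p q : ∀ i, Fin (ℓ i)} (hpq : p ≤ q) :
    fval ℓ n g q ≤ fval ℓ n g p := by
  obtain ⟨h1, h2, h3, h4, h5, h6⟩ := hg
  by_cases hp : goodRep ℓ p
  · rw [fval_good hp]
    by_cases hq : goodRep ℓ q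
    · rw [fval_good hq]
      exact h2 ⟨p, hp⟩ ⟨q, hq⟩ hpq
    · by_cases hq2 : goodRep ℓ (chainRev ℓ q)
      · rw [fval_rvgood hq2]
        have := h3 ⟨p, hp⟩ ⟨chainRev ℓ q, hq2⟩ (by rwa [rv_rv])
        omega
      · rw [fval_fixed (trichotomy ℓ hq hq2)]
        have := h6 ⟨p, hp⟩ q (trichotomy ℓ hq hq2) hpq
        omega
  · by_cases hp2 : goodRep ℓ (chainRev ℓ p)
    · rw [fval_rvgood hp2]
      by_cases hq : goodRep ℓ q
      · rw [fval_good hq]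
        have := h4 ⟨chainRev ℓ p, hp2⟩ ⟨q, hq⟩ (by rwa [rv_rv])
        omega
      · by_cases hq2 : goodRep ℓ (chainRev ℓ q)
        · rw [fval_rvgood hq2]
          have := h2 ⟨chainRev ℓ q, hq2⟩ ⟨chainRev ℓ p, hp2⟩ (rv_antitone ℓ hpq)
          omega
        · rw [fval_fixed (trichotomy ℓ hq hq2)]
          have hzq := trichotomy ℓ hq hq2
          have hle : q ≤ chainRev ℓ p := by
            have := rv_antitone ℓ hpq
            rwa [← hzq]
          have := h5 ⟨chainRev ℓ p, hp2⟩ q hzq hle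
          omega
    · rw [fval_fixed (trichotomy ℓ hp hp2)]
      have hzp := trichotomy ℓ hp hp2
      by_cases hq : goodRep ℓ q
      · rw [fval_good hq]
        have := h5 ⟨q, hq⟩ p hzp hpq
        omega
      · by_cases hq2 : goodRep ℓ (chainRev ℓ q)
        · rw [fval_rvgood hq2]
          have hle : chainRev ℓ q ≤ p := by
            have := rv_antitone ℓ hpq
            rwa [hzp] at this
          have := h6 ⟨chainRev ℓ q, hq2⟩ p hzp hle
          omega
        · rw [fval_fixed (trichotomy ℓ hq hq2)]

lemma fval_compl (hg : OkZ ℓ n g)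
    (hpar : Even n ∨ ∀ p : ∀ i, Fin (ℓ i), chainRev ℓ p ≠ p) (p : ∀ i, Fin (ℓ i)) :
    fval ℓ n g (chainRev ℓ p) + fval ℓ n g p = n := by
  by_cases hp : goodRep ℓ p
  · rw [fval_good hp]
    have h2 : goodRep ℓ (chainRev ℓ (chainRev ℓ p)) := by rwa [rv_rv]
    rw [fval_rvgood h2]
    have he : (⟨chainRev ℓ (chainRev ℓ p), h2⟩ :
        {p : ∀ i, Fin (ℓ i) // goodRep ℓ p}) = ⟨p, hp⟩ := Subtype.ext (rv_rv ℓ p)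
    rw [he]
    ring
  · by_cases hp2 : goodRep ℓ (chainRev ℓ p)
    · rw [fval_rvgood hp2, fval_good hp2]
      ring
    · have hz := trichotomy ℓ hp hp2
      rw [hz, fval_fixed hz]
      rcases hpar with he | hnf
      · obtain ⟨c, hc⟩ := he
        omega
      · exact absurd hz (hnf p)

section Ideals

lemma fin_downset_mem {S : Finset (Fin n)} (hS : ∀ j ∈ S, ∀ j' : Fin n, j' ≤ j → j' ∈ S)
    (j : Fin n) : j ∈ S ↔ j.val < S.card := by
  constructor
  · intro hj
    have hsub : Finset.Iic j ⊆ S := fun j' hj' => hS j hj j' (Finset.mem_Iic.1 hj')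
    have := Finset.card_le_card hsub
    rw [Fin.card_Iic] at this
    omega
  · intro hj
    by_contra hjn
    have hsub : S ⊆ Finset.Iio j := by
      intro j' hj'
      rw [Finset.mem_Iio]
      by_contra hge
      exact hjn (hS j' hj' j (le_of_not_gt hge))
    have := Finset.card_le_card hsub
    rw [Fin.card_Iio] at this
    omega

/-- number of elements of the fiber of an ideal over `p` -/
noncomputable def fOf (I : Finset ((∀ i, Fin (ℓ i)) × Fin n)) (p : ∀ i, Fin (ℓ i)) : ℕ :=
  (univ.filter (fun j : Fin n => (p, j) ∈ I)).card

lemma fOf_le (I : Finset ((∀ i, Fin (ℓ i)) × Fin n)) (p : ∀ i, Fin (ℓ i)) : fOf I p ≤ n := by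
  have := Finset.card_filter_le (univ : Finset (Fin n)) (fun j => (p, j) ∈ I)
  rwa [Finset.card_univ, Fintype.card_fin] at this

lemma mem_iff_lt_fOf {I : Finset ((∀ i, Fin (ℓ i)) × Fin n)} (hI : IsIdeal I)
    (p : ∀ i, Fin (ℓ i)) (j : Fin n) : (p, j) ∈ I ↔ j.val < fOf I p := by
  rw [fOf, ← fin_downset_mem]
  · simp
  · intro a ha a' ha'
    simp only [Finset.mem_filter, Finset.mem_univ, true_and] at ha ⊢
    exact hI (p, a) ha (p, a') ⟨le_refl p, ha'⟩

lemma fOf_antitone {I : Finset ((∀ i, Fin (ℓ i)) × Fin n)} (hI : IsIdeal I)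
    {p q : ∀ i, Fin (ℓ i)} (hpq : p ≤ q) : fOf I q ≤ fOf I p := by
  apply Finset.card_le_card
  intro j hj
  simp only [Finset.mem_filter, Finset.mem_univ, true_and] at hj ⊢
  exact hI (q, j) hj (p, j) ⟨hpq, le_refl j⟩

lemma fOf_compl {I : Finset ((∀ i, Fin (ℓ i)) × Fin n)} (hI : IsSCIdeal (prodRevMix ℓ n) I)
    (p : ∀ i, Fin (ℓ i)) : fOf I (chainRev ℓ p) + fOf I p = n := by
  have h1 : (univ.filter (fun j : Fin n => (p, j) ∈ I)).card
      = (univ.filter (fun j : Fin n => (chainRev ℓ p, j) ∉ I)).card := by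
    apply Finset.card_bij (fun j _ => j.rev)
    · intro a ha
      simp only [Finset.mem_filter, Finset.mem_univ, true_and] at ha ⊢
      have := (hI.2 (p, a)).1 ha
      exact this
    · intro a _ b _ hab
      exact Fin.rev_injective hab
    · intro b hb
      simp only [Finset.mem_filter, Finset.mem_univ, true_and] at hb ⊢
      refine ⟨b.rev, ?_, (Fin.rev_rev b)⟩
      rw [hI.2 (p, b.rev)]
      show ¬ (chainRev ℓ p, b.rev.rev) ∈ I
      rwa [Fin.rev_rev]
  have h2 := Finset.card_filter_add_card_filter_not
    (s := (univ : Finset (Fin n))) (p := fun j => (chainRev ℓ p, j) ∈ I)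
  rw [Finset.card_univ, Fintype.card_fin] at h2
  rw [fOf, fOf, h1]
  omega

lemma gOf_OkZ {I : Finset ((∀ i, Fin (ℓ i)) × Fin n)} (hI : IsSCIdeal (prodRevMix ℓ n) I) :
    OkZ ℓ n (fun p => (fOf I p.1 : ℤ)) := by
  refine ⟨?_, ?_, ?_, ?_, ?_, ?_⟩
  · intro p
    dsimp only
    have := fOf_le I p.1
    omega
  · intro p q hpq
    dsimp only
    have := fOf_antitone hI.1 hpq
    omega
  · intro p q hpq
    dsimp only
    have h1 := fOf_antitone hI.1 hpq
    have h2 := fOf_compl hI q.1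
    have h3 := fOf_le I p.1
    omega
  · intro p q hpq
    dsimp only
    have h1 := fOf_antitone hI.1 hpq
    have h2 := fOf_compl hI p.1
    omega
  · intro p z hz hle
    dsimp only
    have h1 := fOf_antitone hI.1 hle
    have h2 := fOf_compl hI z
    rw [hz] at h2
    omega
  · intro p z hz hle
    dsimp only
    have h1 := fOf_antitone hI.1 hle
    have h2 := fOf_compl hI z
    rw [hz] at h2
    omega

noncomputable def toIdeal (f : (∀ i, Fin (ℓ i)) → ℤ) : Finset ((∀ i, Fin (ℓ i)) × Fin n) :=
  univ.filter (fun x => (x.2.val : ℤ) < f x.1)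

lemma mem_toIdeal {f : (∀ i, Fin (ℓ i)) → ℤ} {x : (∀ i, Fin (ℓ i)) × Fin n} :
    x ∈ (toIdeal f : Finset _) ↔ (x.2.val : ℤ) < f x.1 := by
  rw [toIdeal, Finset.mem_filter]
  simp

lemma toIdeal_isSC {g : {p : ∀ i, Fin (ℓ i) // goodRep ℓ p} → ℤ} (hg : OkZ ℓ n g)
    (hpar : Even n ∨ ∀ p : ∀ i, Fin (ℓ i), chainRev ℓ p ≠ p) :
    IsSCIdeal (prodRevMix ℓ n) (toIdeal (fval ℓ n g) : Finset ((∀ i, Fin (ℓ i)) × Fin n)) := by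
  constructor
  · rintro ⟨p, j⟩ ha ⟨p', j'⟩ hb
    rw [mem_toIdeal] at ha ⊢
    obtain ⟨hb1, hb2⟩ := hb
    have hm := fval_antitone hg hb1
    have : (j'.val : ℤ) ≤ j.val := by exact_mod_cast hb2
    simp only at *
    omega
  · rintro ⟨p, j⟩
    rw [mem_toIdeal, mem_toIdeal]
    have hc := fval_compl hg hpar p
    show (j.val : ℤ) < fval ℓ n g p ↔ ¬ ((j.rev.val : ℤ) < fval ℓ n g (chainRev ℓ p))
    have hrev : j.rev.val = n - (j.val + 1) := Fin.val_rev j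
    have hjn : j.val < n := j.isLt
    have : (j.rev.val : ℤ) = (n : ℤ) - (j.val + 1) := by omega
    rw [this]
    omega

lemma fOf_toIdeal {f : (∀ i, Fin (ℓ i)) → ℤ} (hb : ∀ p, 0 ≤ f p ∧ f p ≤ n)
    (p : ∀ i, Fin (ℓ i)) : (fOf (toIdeal f : Finset ((∀ i, Fin (ℓ i)) × Fin n)) p : ℤ) = f p := by
  have hbp := hb p
  rw [fOf]
  have : (univ.filter (fun j : Fin n => (p, j) ∈ (toIdeal f : Finset _)))
      = (univ.filter (fun j : Fin n => (j.val : ℤ) < f p)) := by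
    apply Finset.filter_congr
    intro j _
    rw [mem_toIdeal]
  rw [this]
  have hcard : (univ.filter (fun j : Fin n => (j.val : ℤ) < f p)).card = (f p).toNat := by
    have hle : ∀ a ∈ Finset.range (f p).toNat, a < n := by
      intro a ha
      simp only [Finset.mem_range] at ha
      omega
    have : (univ.filter (fun j : Fin n => (j.val : ℤ) < f p))
        = (Finset.range (f p).toNat).attachFin hle := by
      ext j
      rw [Finset.mem_attachFin, Finset.mem_range, Finset.mem_filter]
      simp only [Finset.mem_univ, true_and]
      omega
    rw [this, Finset.card_attachFin, Finset.card_range]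
  rw [hcard]
  omega

lemma fval_gOf {I : Finset ((∀ i, Fin (ℓ i)) × Fin n)} (hI : IsSCIdeal (prodRevMix ℓ n) I)
    (hpar : Even n ∨ ∀ p : ∀ i, Fin (ℓ i), chainRev ℓ p ≠ p) (p : ∀ i, Fin (ℓ i)) :
    fval ℓ n (fun q => (fOf I q.1 : ℤ)) p = (fOf I p : ℤ) := by
  by_cases hp : goodRep ℓ p
  · rw [fval_good hp]
  · by_cases hp2 : goodRep ℓ (chainRev ℓ p)
    · rw [fval_rvgood hp2]
      dsimp only
      have := fOf_compl hI p
      omega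
    · have hz := trichotomy ℓ hp hp2
      rw [fval_fixed hz]
      have := fOf_compl hI p
      rw [hz] at this
      rcases hpar with he | hnf
      · obtain ⟨c, hc⟩ := he
        omega
      · exact absurd hz (hnf p)

lemma toIdeal_fOf {I : Finset ((∀ i, Fin (ℓ i)) × Fin n)} (hI : IsIdeal I) :
    (toIdeal (fun p => (fOf I p : ℤ)) : Finset ((∀ i, Fin (ℓ i)) × Fin n)) = I := by
  ext ⟨p, j⟩
  rw [mem_toIdeal, mem_iff_lt_fOf hI]
  constructor
  · intro h
    exact_mod_cast h
  · intro h
    exact_mod_cast h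

noncomputable def Tn (ℓ : Fin m → ℕ) (n : ℕ) : Finset ({p : ∀ i, Fin (ℓ i) // goodRep ℓ p} → ℤ) :=
  @Finset.filter _ (OkZ ℓ n) (Classical.decPred _)
    (Finset.Icc (fun _ => 0) (fun _ => (n : ℤ)))

lemma mem_Tn {g : {p : ∀ i, Fin (ℓ i) // goodRep ℓ p} → ℤ} : g ∈ Tn ℓ n ↔ OkZ ℓ n g := by
  classical
  rw [Tn, Finset.mem_filter, Finset.mem_Icc]
  constructor
  · exact fun h => h.2
  · intro h
    refine ⟨⟨fun p => (h.1 p).1, fun p => (h.1 p).2⟩, h⟩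

theorem card_ideals_eq (hpar : Even n ∨ ∀ p : ∀ i, Fin (ℓ i), chainRev ℓ p ≠ p) :
    Nat.card {I : Finset ((∀ i, Fin (ℓ i)) × Fin n) // IsSCIdeal (prodRevMix ℓ n) I}
      = (Tn ℓ n).card := by
  have e : {I : Finset ((∀ i, Fin (ℓ i)) × Fin n) // IsSCIdeal (prodRevMix ℓ n) I}
      ≃ {g : {p : ∀ i, Fin (ℓ i) // goodRep ℓ p} → ℤ // OkZ ℓ n g} := by
    refine ⟨fun I => ⟨fun p => (fOf I.1 p.1 : ℤ), gOf_OkZ I.2⟩,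
      fun g => ⟨toIdeal (fval ℓ n g.1), toIdeal_isSC g.2 hpar⟩, ?_, ?_⟩
    · rintro ⟨I, hI⟩
      apply Subtype.ext
      show toIdeal (fval ℓ n (fun q => (fOf I q.1 : ℤ))) = I
      have : fval ℓ n (fun q => (fOf I q.1 : ℤ)) = (fun p => (fOf I p : ℤ)) :=
        funext (fval_gOf hI hpar)
      rw [this]
      exact toIdeal_fOf hI.1
    · rintro ⟨g, hg⟩
      apply Subtype.ext
      funext p
      show (fOf (toIdeal (fval ℓ n g) : Finset _) p.1 : ℤ) = g p
      rw [fOf_toIdeal (fval_bounds hg) p.1, fval_good p.2]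
  rw [Nat.card_congr e]
  have e2 : {g : {p : ∀ i, Fin (ℓ i) // goodRep ℓ p} → ℤ // OkZ ℓ n g} ≃ ↥(Tn ℓ n) :=
    Equiv.subtypeEquivRight (fun g => mem_Tn.symm)
  rw [Nat.card_congr e2, Nat.card_eq_finsetCard]

end Ideals

section Poly
variable (ℓ)

def OkR (x : {p : ∀ i, Fin (ℓ i) // goodRep ℓ p} → ℝ) : Prop :=
  (∀ p, 0 ≤ x p ∧ x p ≤ 1) ∧
  (∀ p q, p.1 ≤ q.1 → x q ≤ x p) ∧
  (∀ p q, p.1 ≤ chainRev ℓ q.1 → 1 ≤ x p + x q) ∧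
  (∀ p q, chainRev ℓ p.1 ≤ q.1 → x p + x q ≤ 1) ∧
  (∀ (p : {p : ∀ i, Fin (ℓ i) // goodRep ℓ p}) (z : ∀ i, Fin (ℓ i)),
      chainRev ℓ z = z → z ≤ p.1 → 2 * x p ≤ 1) ∧
  (∀ (p : {p : ∀ i, Fin (ℓ i) // goodRep ℓ p}) (z : ∀ i, Fin (ℓ i)),
      chainRev ℓ z = z → p.1 ≤ z → 1 ≤ 2 * x p)

def QSet : Set ({p : ∀ i, Fin (ℓ i) // goodRep ℓ p} → ℝ) := {x | OkR ℓ x}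

lemma QSet_convex : Convex ℝ (QSet ℓ) := by
  rintro x hx y hy a b ha hb hab
  obtain ⟨x1, x2, x3, x4, x5, x6⟩ := hx
  obtain ⟨y1, y2, y3, y4, y5, y6⟩ := hy
  refine ⟨?_, ?_, ?_, ?_, ?_, ?_⟩ <;>
    simp only [Pi.add_apply, Pi.smul_apply, smul_eq_mul]
  · intro p
    have h1 := x1 p; have h2 := y1 p
    constructor <;> nlinarith [h1.1, h1.2, h2.1, h2.2]
  · intro p q hpq
    have h1 := x2 p q hpq; have h2 := y2 p q hpq
    nlinarith
  · intro p q hpq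
    have h1 := x3 p q hpq; have h2 := y3 p q hpq
    nlinarith
  · intro p q hpq
    have h1 := x4 p q hpq; have h2 := y4 p q hpq
    nlinarith
  · intro p z hz hle
    have h1 := x5 p z hz hle; have h2 := y5 p z hz hle
    nlinarith
  · intro p z hz hle
    have h1 := x6 p z hz hle; have h2 := y6 p z hz hle
    nlinarith

lemma QSet_bounded : QSet ℓ ⊆ Metric.closedBall 0 1 := by
  intro x hx
  rw [Metric.mem_closedBall, dist_zero_right]
  rw [pi_norm_le_iff_of_nonneg zero_le_one]
  intro p
  rw [Real.norm_eq_abs, abs_le]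
  have := hx.1 p
  constructor <;> linarith [this.1, this.2]

/-- integer potential used to find an interior point -/
def hfun (p : ∀ i, Fin (ℓ i)) : ℤ :=
  (∑ i, (((chainRev ℓ p) i).val : ℤ)) - ∑ i, ((p i).val : ℤ)

lemma hfun_rv (p : ∀ i, Fin (ℓ i)) : hfun ℓ (chainRev ℓ p) = - hfun ℓ p := by
  rw [hfun, hfun, rv_rv]
  ring

lemma hfun_fixed {p : ∀ i, Fin (ℓ i)} (h : chainRev ℓ p = p) : hfun ℓ p = 0 := by
  rw [hfun, h]
  ring

lemma hfun_strict {p q : ∀ i, Fin (ℓ i)} (hle : p ≤ q) (hne : p ≠ q) :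
    hfun ℓ q + 1 ≤ hfun ℓ p := by
  have h1 : (∑ i, ((p i).val : ℤ)) + 1 ≤ ∑ i, ((q i).val : ℤ) := by
    have : (∑ i, ((p i).val : ℤ)) < ∑ i, ((q i).val : ℤ) := by
      apply Finset.sum_lt_sum
      · intro i _
        exact_mod_cast (hle i)
      · have : ∃ i, p i ≠ q i := by
          by_contra hc
          push_neg at hc
          exact hne (funext hc)
        obtain ⟨i, hi⟩ := this
        refine ⟨i, Finset.mem_univ i, ?_⟩
        have : (p i).val < (q i).val := lt_of_le_of_ne (hle i) (fun hv => hi (Fin.ext hv))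
        exact_mod_cast this
    omega
  have h2 : (∑ i, (((chainRev ℓ q) i).val : ℤ)) ≤ ∑ i, (((chainRev ℓ p) i).val : ℤ) := by
    apply Finset.sum_le_sum
    intro i _
    have : (chainRev ℓ q) i ≤ (chainRev ℓ p) i := rv_antitone ℓ hle i
    exact_mod_cast this
  rw [hfun, hfun]
  omega

lemma hfun_bound (p : ∀ i, Fin (ℓ i)) :
    |hfun ℓ p| ≤ ∑ i, (ℓ i : ℤ) := by
  have hb : ∀ q : ∀ i, Fin (ℓ i), 0 ≤ (∑ i, ((q i).val : ℤ)) ∧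
      (∑ i, ((q i).val : ℤ)) ≤ ∑ i, (ℓ i : ℤ) := by
    intro q
    constructor
    · apply Finset.sum_nonneg
      intro i _
      positivity
    · apply Finset.sum_le_sum
      intro i _
      have := (q i).isLt
      omega
  have h1 := hb p
  have h2 := hb (chainRev ℓ p)
  rw [hfun, abs_le]
  constructor <;> omega


/-- the interior point -/
noncomputable def xc : {p : ∀ i, Fin (ℓ i) // goodRep ℓ p} → ℝ :=
  fun p => 1/2 + (4 * ((∑ i, (ℓ i : ℝ)) + 1))⁻¹ * (hfun ℓ p.1 : ℝ)

lemma ball_subset_QSet :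
    Metric.closedBall (xc ℓ) ((8 * ((∑ i, (ℓ i : ℝ)) + 1))⁻¹) ⊆ QSet ℓ := by
  set Mr : ℝ := (∑ i, (ℓ i : ℝ)) + 1 with hMrdef
  have hMr1 : 1 ≤ Mr := by
    rw [hMrdef]
    have : (0:ℝ) ≤ ∑ i, (ℓ i : ℝ) := Finset.sum_nonneg (fun i _ => by positivity)
    linarith
  have hMr0 : 0 < Mr := by linarith
  set ε : ℝ := (4 * Mr)⁻¹ with hεdef
  have hε0 : 0 < ε := by positivity
  have hε14 : ε ≤ 1/4 := by
    rw [hεdef]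
    rw [inv_le_comm₀ (by positivity) (by norm_num)]
    linarith
  have hεh : ∀ p : ∀ i, Fin (ℓ i), |ε * (hfun ℓ p : ℝ)| ≤ 1/4 := by
    intro p
    rw [abs_mul, abs_of_pos hε0]
    have hb : |(hfun ℓ p : ℝ)| ≤ Mr := by
      have := hfun_bound ℓ p
      have hcast : |(hfun ℓ p : ℝ)| ≤ (∑ i, (ℓ i : ℝ)) := by
        rw [← Int.cast_abs]
        have h2 : ((∑ i, (ℓ i : ℤ)) : ℝ) = ∑ i, (ℓ i : ℝ) := by push_cast; rfl
        rw [← h2]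
        exact_mod_cast this
      linarith
    calc ε * |(hfun ℓ p : ℝ)| ≤ ε * Mr := by nlinarith [abs_nonneg (hfun ℓ p : ℝ)]
    _ = 1/4 := by rw [hεdef]; field_simp
  intro y hy
  rw [Metric.mem_closedBall] at hy
  have hyc : ∀ p, |y p - xc ℓ p| ≤ ε/2 := by
    intro p
    have h1 : dist (y p) (xc ℓ p) ≤ dist y (xc ℓ) := dist_le_pi_dist y (xc ℓ) p
    rw [Real.dist_eq] at h1
    have h2 : (8 * Mr)⁻¹ = ε/2 := by
      rw [hεdef]
      field_simp
      ring
    calc |y p - xc ℓ p| ≤ dist y (xc ℓ) := h1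
    _ ≤ (8 * Mr)⁻¹ := hy
    _ = ε/2 := h2
  have hxc : ∀ p, xc ℓ p = 1/2 + ε * (hfun ℓ p.1 : ℝ) := fun p => rfl
  refine ⟨?_, ?_, ?_, ?_, ?_, ?_⟩
  · intro p
    have h1 := hyc p
    have h2 := hεh p.1
    rw [abs_le] at h1 h2
    rw [hxc p] at h1
    constructor <;> linarith [h1.1, h1.2, h2.1, h2.2]
  · intro p q hpq
    rcases eq_or_ne p q with rfl | hne
    · exact le_refl _
    · have hne1 : p.1 ≠ q.1 := fun h => hne (Subtype.ext h)
      have hst := hfun_strict ℓ hpq hne1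
      have hstR : (hfun ℓ q.1 : ℝ) + 1 ≤ (hfun ℓ p.1 : ℝ) := by exact_mod_cast hst
      have h1 := hyc p; have h2 := hyc q
      rw [abs_le] at h1 h2
      rw [hxc p] at h1; rw [hxc q] at h2
      nlinarith
  · intro p q hpq
    have hne : p.1 ≠ chainRev ℓ q.1 := by
      intro h
      have := not_goodRep_rv ℓ q.2
      rw [← h] at this
      exact this p.2
    have hst := hfun_strict ℓ hpq hne
    rw [hfun_rv] at hst
    have hstR : -(hfun ℓ q.1 : ℝ) + 1 ≤ (hfun ℓ p.1 : ℝ) := by exact_mod_cast hst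
    have h1 := hyc p; have h2 := hyc q
    rw [abs_le] at h1 h2
    rw [hxc p] at h1; rw [hxc q] at h2
    nlinarith
  · intro p q hpq
    have hne : chainRev ℓ p.1 ≠ q.1 := by
      intro h
      have := not_goodRep_rv ℓ p.2
      rw [h] at this
      exact this q.2
    have hst := hfun_strict ℓ hpq hne
    rw [hfun_rv] at hst
    have hstR : (hfun ℓ q.1 : ℝ) + 1 ≤ -(hfun ℓ p.1 : ℝ) := by exact_mod_cast hst
    have h1 := hyc p; have h2 := hyc q
    rw [abs_le] at h1 h2
    rw [hxc p] at h1; rw [hxc q] at h2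
    nlinarith
  · intro p z hz hle
    have hne : z ≠ p.1 := by
      intro h
      exact fixed_not_good ℓ hz (h ▸ p.2)
    have hst := hfun_strict ℓ hle hne
    rw [hfun_fixed ℓ hz] at hst
    have hstR : (hfun ℓ p.1 : ℝ) + 1 ≤ 0 := by exact_mod_cast hst
    have h1 := hyc p
    rw [abs_le] at h1
    rw [hxc p] at h1
    nlinarith
  · intro p z hz hle
    have hne : p.1 ≠ z := by
      intro h
      exact fixed_not_good ℓ hz (h ▸ p.2)
    have hst := hfun_strict ℓ hle hne
    rw [hfun_fixed ℓ hz] at hst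
    have hstR : 1 ≤ (hfun ℓ p.1 : ℝ) := by exact_mod_cast hst
    have h1 := hyc p
    rw [abs_le] at h1
    rw [hxc p] at h1
    nlinarith

open Pointwise in
lemma okZ_iff_smul_mem {n : ℕ} (hn : 1 ≤ n) (g : {p : ∀ i, Fin (ℓ i) // goodRep ℓ p} → ℤ) :
    OkZ ℓ n g ↔ (fun p => (g p : ℝ)) ∈ (n : ℝ) • QSet ℓ := by
  have hn0 : (0:ℝ) < n := by exact_mod_cast hn
  rw [Set.mem_smul_set_iff_inv_smul_mem₀ hn0.ne']
  have hmem : ((n : ℝ)⁻¹ • fun p => (g p : ℝ)) ∈ QSet ℓ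
      ↔ OkR ℓ (fun p => (n:ℝ)⁻¹ * (g p : ℝ)) := Iff.rfl
  rw [hmem]
  have keyc : (n:ℝ)⁻¹ * (n:ℝ) = 1 := inv_mul_cancel₀ hn0.ne'
  have key1 : ∀ a b : ℝ, a ≤ b → (n:ℝ)⁻¹ * a ≤ (n:ℝ)⁻¹ * b :=
    fun a b h => mul_le_mul_of_nonneg_left h (by positivity)
  have key2 : ∀ a b : ℝ, (n:ℝ)⁻¹ * a ≤ (n:ℝ)⁻¹ * b → a ≤ b :=
    fun a b h => le_of_mul_le_mul_left h (by positivity)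
  constructor
  · rintro ⟨h1, h2, h3, h4, h5, h6⟩
    refine ⟨?_, ?_, ?_, ?_, ?_, ?_⟩ <;> dsimp only
    · intro p
      have hb := h1 p
      have hgp0 : (0:ℝ) ≤ (g p : ℝ) := by exact_mod_cast hb.1
      have hgpn : ((g p : ℝ)) ≤ (n:ℝ) := by exact_mod_cast hb.2
      constructor
      · positivity
      · calc (n:ℝ)⁻¹ * (g p : ℝ) ≤ (n:ℝ)⁻¹ * (n:ℝ) := key1 _ _ hgpn
        _ = 1 := keyc
    · intro p q hpq
      exact key1 _ _ (by exact_mod_cast h2 p q hpq)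
    · intro p q hpq
      have h := key1 (n:ℝ) ((g p : ℝ) + (g q : ℝ)) (by exact_mod_cast h3 p q hpq)
      rw [keyc, mul_add] at h
      exact h
    · intro p q hpq
      have h := key1 ((g p : ℝ) + (g q : ℝ)) (n:ℝ) (by exact_mod_cast h4 p q hpq)
      rw [keyc, mul_add] at h
      exact h
    · intro p z hz hle
      have h := key1 (2 * (g p : ℝ)) (n:ℝ) (by exact_mod_cast h5 p z hz hle)
      rw [keyc] at h
      calc 2 * ((n:ℝ)⁻¹ * (g p : ℝ)) = (n:ℝ)⁻¹ * (2 * (g p : ℝ)) := by ring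
      _ ≤ 1 := h
    · intro p z hz hle
      have h := key1 (n:ℝ) (2 * (g p : ℝ)) (by exact_mod_cast h6 p z hz hle)
      rw [keyc] at h
      calc (1:ℝ) ≤ (n:ℝ)⁻¹ * (2 * (g p : ℝ)) := h
      _ = 2 * ((n:ℝ)⁻¹ * (g p : ℝ)) := by ring
  · rintro ⟨h1, h2, h3, h4, h5, h6⟩
    simp only at h1 h2 h3 h4 h5 h6
    refine ⟨?_, ?_, ?_, ?_, ?_, ?_⟩
    · intro p
      have hb := h1 p
      have hlo : (0:ℝ) ≤ (g p : ℝ) := key2 0 _ (by rw [mul_zero]; exact hb.1)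
      have hhi : ((g p : ℝ)) ≤ (n:ℝ) := key2 _ _ (by rw [keyc]; exact hb.2)
      constructor
      · exact_mod_cast hlo
      · exact_mod_cast hhi
    · intro p q hpq
      have := key2 _ _ (h2 p q hpq)
      exact_mod_cast this
    · intro p q hpq
      have h := h3 p q hpq
      rw [← mul_add] at h
      have := key2 (n:ℝ) ((g p : ℝ) + (g q : ℝ)) (by rw [keyc]; exact h)
      exact_mod_cast this
    · intro p q hpq
      have h := h4 p q hpq
      rw [← mul_add] at h
      have := key2 ((g p : ℝ) + (g q : ℝ)) (n:ℝ) (by rw [keyc]; exact h)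
      exact_mod_cast this
    · intro p z hz hle
      have h := h5 p z hz hle
      have h' : (n:ℝ)⁻¹ * (2 * (g p : ℝ)) ≤ (n:ℝ)⁻¹ * (n:ℝ) := by
        rw [keyc]
        calc (n:ℝ)⁻¹ * (2 * (g p : ℝ)) = 2 * ((n:ℝ)⁻¹ * (g p : ℝ)) := by ring
        _ ≤ 1 := h
      have := key2 _ _ h'
      exact_mod_cast this
    · intro p z hz hle
      have h := h6 p z hz hle
      have h' : (n:ℝ)⁻¹ * (n:ℝ) ≤ (n:ℝ)⁻¹ * (2 * (g p : ℝ)) := by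
        rw [keyc]
        calc (1:ℝ) ≤ 2 * ((n:ℝ)⁻¹ * (g p : ℝ)) := h
        _ = (n:ℝ)⁻¹ * (2 * (g p : ℝ)) := by ring
      have := key2 _ _ h'
      exact_mod_cast this

end Poly
end Comb


/-- With `ℓ₁, …, ℓ_{d-1}` fixed positive integers and `k = ⌊ℓ₁⋯ℓ_{d-1}/2⌋`, the number
`N(n)` of self-complementary ideals of `[ℓ₁] × ⋯ × [ℓ_{d-1}] × [n]` satisfies
`N(n) / n^k → C` for some constant `C > 0`, where `n` ranges over all positive integers
if `ℓ₁⋯ℓ_{d-1}` is even and over all even positive integers otherwise. -/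
theorem scIdeals_count_asymptotic (m : ℕ) (ℓ : Fin m → ℕ) (hpos : ∀ i, 0 < ℓ i) :
    ∃ C : ℝ, 0 < C ∧
      (Even (∏ i, ℓ i) →
        Filter.Tendsto
          (fun n : ℕ =>
            (Nat.card {I : Finset ((∀ i, Fin (ℓ i)) × Fin n) //
                IsSCIdeal (prodRevMix ℓ n) I} : ℝ) / (n : ℝ) ^ ((∏ i, ℓ i) / 2))
          Filter.atTop (nhds C)) ∧
      (¬ Even (∏ i, ℓ i) →
        Filter.Tendsto
          (fun n : ℕ =>
            (Nat.card {I : Finset ((∀ i, Fin (ℓ i)) × Fin n) //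
                IsSCIdeal (prodRevMix ℓ n) I} : ℝ) / (n : ℝ) ^ ((∏ i, ℓ i) / 2))
          (Filter.atTop ⊓ Filter.principal {n : ℕ | Even n}) (nhds C)) := by
  classical
  have hcard : Fintype.card {p : ∀ i, Fin (ℓ i) // goodRep ℓ p} = (∏ i, ℓ i) / 2 :=
    card_goodRep ℓ hpos
  have hr0 : (0:ℝ) < (8 * ((∑ i, (ℓ i : ℝ)) + 1))⁻¹ := by
    have : (0:ℝ) ≤ ∑ i, (ℓ i : ℝ) := Finset.sum_nonneg (fun i _ => by positivity)
    positivity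
  obtain ⟨hC, htend⟩ := lattice_count_tendsto (QSet ℓ) (QSet_convex ℓ) (QSet_bounded ℓ)
    hr0 (ball_subset_QSet ℓ) (Tn ℓ)
    (fun n hn g => by rw [mem_Tn]; exact okZ_iff_smul_mem ℓ hn g)
  rw [hcard] at htend
  refine ⟨(MeasureTheory.volume (QSet ℓ)).toReal, hC, ?_, ?_⟩
  · intro hEv
    apply htend.congr
    intro n
    rw [card_ideals_eq (Or.inr (even_no_fixed ℓ hEv))]
  · intro _
    have h1 := htend.mono_left (inf_le_left :
      Filter.atTop ⊓ Filter.principal {n : ℕ | Even n} ≤ Filter.atTop)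
    apply h1.congr'
    apply Filter.eventually_of_mem (Filter.mem_inf_of_right (Filter.mem_principal_self _))
    intro n hn
    have hn' : Even n := hn
    dsimp only
    rw [card_ideals_eq (Or.inl hn')]
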